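/- Let φ₁ be a 2-CNF formula with m clauses, each clause being a disjunction of two literals over distinct variables. Let φ₂ be the 2-CNF formula obtained from φ₁ by replacing every clause α = (ℓ₁ ∨ ℓ₂) of φ₁ with the conjunction of the three clauses (ℓ₁ ∨ x_α), (ℓ₂ ∨ y_α), (x_α ∨ y_α), where x_α and y_α are fresh variables introduced for the clause α. Then the maximum, over truth assignments, of the number of XOR-satisfied clauses of φ₂ equals the maximum, over truth assignments, of the number of XOR-satisfied clauses of φ₁, plus 2m. -/

import Mathlib

/-- A literal over the variable type `α`: a variable together with a negation flag
(`true` means the variable appears negated). -/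
abbrev Lit (α : Type*) := α × Bool

/-- The truth value of a literal under the truth assignment `τ`. -/
def evalLit {α : Type*} (τ : α → Bool) (l : Lit α) : Bool := xor (τ l.1) l.2

/-- The number of clauses of the 2-CNF formula `φ` (a family of clauses, each a
pair of literals) that are XOR-satisfied by the truth assignment `τ`: a clause is
XOR-satisfied if exactly one of its two literals is true under `τ`. -/
def countXorSat {α ι : Type*} [Fintype ι] (φ : ι → Lit α × Lit α) (τ : α → Bool) : ℕ :=
  (Finset.univ.filter fun j => evalLit τ (φ j).1 ≠ evalLit τ (φ j).2).card

/-- The formula `φ₂` obtained from a 2-CNF formula `φ₁` with `m` clauses by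
replacing each clause `α = (ℓ₁ ∨ ℓ₂)` (clause index `j`) with the three clauses
`(ℓ₁ ∨ x_α)`, `(ℓ₂ ∨ y_α)`, `(x_α ∨ y_α)`, where `x_α = Sum.inr (j, false)` and
`y_α = Sum.inr (j, true)` are fresh variables for the clause `α`. -/
def xorExpand {α : Type*} {m : ℕ} (φ : Fin m → Lit α × Lit α) :
    Fin m × Fin 3 → Lit (α ⊕ Fin m × Bool) × Lit (α ⊕ Fin m × Bool) :=
  fun p =>
    if p.2 = 0 then
      ((Sum.inl (φ p.1).1.1, (φ p.1).1.2), (Sum.inr (p.1, false), false))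
    else if p.2 = 1 then
      ((Sum.inl (φ p.1).2.1, (φ p.1).2.2), (Sum.inr (p.1, true), false))
    else
      ((Sum.inr (p.1, false), false), (Sum.inr (p.1, true), false))

open Finset in
lemma countXorSat_eq_sum {α ι : Type*} [Fintype ι] (φ : ι → Lit α × Lit α) (τ : α → Bool) :
    countXorSat φ τ =
      ∑ j, (if evalLit τ (φ j).1 ≠ evalLit τ (φ j).2 then 1 else 0) := by
  rw [countXorSat, Finset.card_filter]

lemma xorKey_le (a b x y : Bool) :
    ((if a ≠ x then 1 else 0) + (if b ≠ y then 1 else 0) + (if x ≠ y then 1 else 0) : ℕ)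
      ≤ (if a ≠ b then 1 else 0) + 2 := by
  cases a <;> cases b <;> cases x <;> cases y <;> decide

lemma xorKey_eq (a b : Bool) :
    ((if a ≠ !a then 1 else 0) + (if b ≠ a then 1 else 0) + (if (!a) ≠ a then 1 else 0) : ℕ)
      = (if a ≠ b then 1 else 0) + 2 := by
  cases a <;> cases b <;> decide

open Finset in
lemma count_expand_eq {α : Type*} {m : ℕ} (φ₁ : Fin m → Lit α × Lit α)
    (τ : α ⊕ Fin m × Bool → Bool) :
    countXorSat (xorExpand φ₁) τ =
      ∑ j : Fin m,
        ((if evalLit (τ ∘ Sum.inl) (φ₁ j).1 ≠ τ (Sum.inr (j, false)) then 1 else 0) +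
         (if evalLit (τ ∘ Sum.inl) (φ₁ j).2 ≠ τ (Sum.inr (j, true)) then 1 else 0) +
         (if τ (Sum.inr (j, false)) ≠ τ (Sum.inr (j, true)) then 1 else 0)) := by
  rw [countXorSat, Finset.card_filter, Fintype.sum_prod_type]
  refine Finset.sum_congr rfl fun j _ => ?_
  rw [Fin.sum_univ_three]
  simp [xorExpand, evalLit, Function.comp, add_assoc]
  split_ifs <;> simp_all

/-- If every clause of the 2-CNF formula `φ₁` has its two literals on distinct
variables, then the maximum number of simultaneously XOR-satisfiable clauses of
the expanded formula `φ₂` equals the maximum number of simultaneously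
XOR-satisfiable clauses of `φ₁`, plus `2m`. -/
theorem maxXorSat_expand {α : Type*} (m : ℕ) (φ₁ : Fin m → Lit α × Lit α)
    (hdistinct : ∀ j, ((φ₁ j).1).1 ≠ ((φ₁ j).2).1) :
    sSup {n | ∃ τ : α ⊕ Fin m × Bool → Bool, countXorSat (xorExpand φ₁) τ = n} =
      sSup {n | ∃ τ : α → Bool, countXorSat φ₁ τ = n} + 2 * m := by
  set S₁ : Set ℕ := {n | ∃ τ : α → Bool, countXorSat φ₁ τ = n} with hS₁
  set S₂ : Set ℕ := {n | ∃ τ : α ⊕ Fin m × Bool → Bool, countXorSat (xorExpand φ₁) τ = n}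
    with hS₂
  have hne₁ : S₁.Nonempty := ⟨_, fun _ => false, rfl⟩
  have hne₂ : S₂.Nonempty := ⟨_, fun _ => false, rfl⟩
  have hbdd₁ : BddAbove S₁ := by
    refine ⟨m, fun n hn => ?_⟩
    obtain ⟨τ, rfl⟩ := hn
    calc countXorSat φ₁ τ ≤ (Finset.univ : Finset (Fin m)).card := Finset.card_filter_le _ _
    _ = m := by simp
  have hbdd₂ : BddAbove S₂ := by
    refine ⟨3 * m, fun n hn => ?_⟩
    obtain ⟨τ, rfl⟩ := hn
    calc countXorSat (xorExpand φ₁) τ ≤ (Finset.univ : Finset (Fin m × Fin 3)).card :=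
      Finset.card_filter_le _ _
    _ = 3 * m := by simp [Fintype.card_prod, Nat.mul_comm]
  apply le_antisymm
  · refine csSup_le hne₂ fun n hn => ?_
    obtain ⟨τ, rfl⟩ := hn
    have h1 : countXorSat (xorExpand φ₁) τ ≤ countXorSat φ₁ (τ ∘ Sum.inl) + 2 * m := by
      rw [count_expand_eq, countXorSat_eq_sum]
      calc ∑ j : Fin m,
          ((if evalLit (τ ∘ Sum.inl) (φ₁ j).1 ≠ τ (Sum.inr (j, false)) then 1 else 0) +
           (if evalLit (τ ∘ Sum.inl) (φ₁ j).2 ≠ τ (Sum.inr (j, true)) then 1 else 0) +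
           (if τ (Sum.inr (j, false)) ≠ τ (Sum.inr (j, true)) then 1 else 0))
          ≤ ∑ j : Fin m,
            ((if evalLit (τ ∘ Sum.inl) (φ₁ j).1 ≠ evalLit (τ ∘ Sum.inl) (φ₁ j).2
              then 1 else 0) + 2) :=
            Finset.sum_le_sum fun j _ => xorKey_le _ _ _ _
      _ = (∑ j : Fin m, if evalLit (τ ∘ Sum.inl) (φ₁ j).1 ≠ evalLit (τ ∘ Sum.inl) (φ₁ j).2
              then 1 else 0) + 2 * m := by
            rw [Finset.sum_add_distrib]
            simp [Nat.mul_comm]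
    have h2 : countXorSat φ₁ (τ ∘ Sum.inl) ≤ sSup S₁ :=
      le_csSup hbdd₁ ⟨τ ∘ Sum.inl, rfl⟩
    omega
  · obtain ⟨τ₁, hτ₁⟩ := Nat.sSup_mem hne₁ hbdd₁
    set τ₂ : α ⊕ Fin m × Bool → Bool :=
      Sum.elim τ₁ (fun p => if p.2 then evalLit τ₁ (φ₁ p.1).1 else !(evalLit τ₁ (φ₁ p.1).1))
      with hτ₂
    have hcomp : τ₂ ∘ Sum.inl = τ₁ := rfl
    have hcount : countXorSat (xorExpand φ₁) τ₂ = countXorSat φ₁ τ₁ + 2 * m := by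
      rw [count_expand_eq, countXorSat_eq_sum]
      have : ∀ j : Fin m,
          ((if evalLit (τ₂ ∘ Sum.inl) (φ₁ j).1 ≠ τ₂ (Sum.inr (j, false)) then 1 else 0) +
           (if evalLit (τ₂ ∘ Sum.inl) (φ₁ j).2 ≠ τ₂ (Sum.inr (j, true)) then 1 else 0) +
           (if τ₂ (Sum.inr (j, false)) ≠ τ₂ (Sum.inr (j, true)) then 1 else 0))
          = (if evalLit τ₁ (φ₁ j).1 ≠ evalLit τ₁ (φ₁ j).2 then 1 else 0) + 2 := by
        intro j
        have e1 : τ₂ (Sum.inr (j, false)) = !(evalLit τ₁ (φ₁ j).1) := rfl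
        have e2 : τ₂ (Sum.inr (j, true)) = evalLit τ₁ (φ₁ j).1 := rfl
        rw [hcomp, e1, e2]
        exact xorKey_eq _ _
      rw [Finset.sum_congr rfl fun j _ => this j, Finset.sum_add_distrib]
      simp [Nat.mul_comm]
    refine le_csSup hbdd₂ ⟨τ₂, ?_⟩
    rw [hcount, hτ₁]
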